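/- Let L be a self-adjoint operator on a Hilbert space with exactly one negative eigenvalue (simple), trivial intersection of its kernel with the span of a fixed vector φ ∉ ker L with φ ⊥ ker L, and suppose L⁻¹φ is well-defined on ker(L)^⊥ with ⟨L⁻¹φ, φ⟩ < 0. Then L restricted to {φ}^⊥ is non-negative: ⟨Lv, v⟩ ≥ 0 for all v ∈ D(L) with ⟨v, φ⟩ = 0. -/

import Mathlib

set_option maxHeartbeats 1000000 in
/-- [HSS16, Lemma 1]-type result: let `L` be self-adjoint on a real Hilbert space with
exactly one (simple) negative eigenvalue `-λ₁` with unit eigenvector `e₁`, spectral gap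
`δ > 0` above `0` (coercivity on `{e₁, ker L}ᗮ`), let `φ ⊥ ker L` with `φ ∉ ker L`, and
let `w ⊥ ker L` solve `Lw = φ` with `⟨w,φ⟩ < 0`.  Then `L` is non-negative on
`{φ}^⊥`: `⟨Lv, v⟩ ≥ 0` whenever `⟨v, φ⟩ = 0`. -/
theorem stmt18 {H : Type*} [NormedAddCommGroup H] [InnerProductSpace ℝ H]
    [CompleteSpace H]
    (L : H →L[ℝ] H) (hsa : IsSelfAdjoint L)
    (lam₁ δ : ℝ) (hlam₁ : 0 < lam₁) (hδ : 0 < δ)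
    (e₁ : H) (he₁ : ‖e₁‖ = 1) (hev : L e₁ = (-lam₁) • e₁)
    (hsimple : ∀ v : H, L v = (-lam₁) • v → ∃ s : ℝ, v = s • e₁)
    (hgap : ∀ v : H, (inner ℝ v e₁ : ℝ) = 0 →
      (∀ k : H, L k = 0 → (inner ℝ v k : ℝ) = 0) →
      δ * ‖v‖^2 ≤ (inner ℝ (L v) v : ℝ))
    (φ w : H)
    (hφker : ∀ k : H, L k = 0 → (inner ℝ φ k : ℝ) = 0)
    (hφnotker : L φ ≠ 0)
    (hw : L w = φ)
    (hwker : ∀ k : H, L k = 0 → (inner ℝ w k : ℝ) = 0)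
    (hneg : (inner ℝ w φ : ℝ) < 0) :
    ∀ v : H, (inner ℝ v φ : ℝ) = 0 → 0 ≤ (inner ℝ (L v) v : ℝ) := by
  intro v hvφ
  have symm : ∀ x y : H, (inner ℝ (L x) y : ℝ) = inner ℝ x (L y) := fun x y => hsa.isSymmetric x y
  set K : Submodule ℝ H := LinearMap.ker (L : H →ₗ[ℝ] H) with hK
  haveI : CompleteSpace K := (ContinuousLinearMap.isClosed_ker L).completeSpace_coe
  have e1self : (inner ℝ e₁ e₁ : ℝ) = 1 := by
    rw [real_inner_self_eq_norm_mul_norm, he₁]; norm_num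
  have he₁K : ∀ k : H, L k = 0 → (inner ℝ e₁ k : ℝ) = 0 := by
    intro k hk
    have h1 : (inner ℝ (L e₁) k : ℝ) = 0 := by rw [symm, hk, inner_zero_right]
    rw [hev, real_inner_smul_left] at h1
    rcases mul_eq_zero.mp h1 with h | h
    · exact absurd h (by linarith)
    · exact h
  set a : ℝ := inner ℝ v e₁ with ha
  set b : ℝ := inner ℝ w e₁ with hb
  set kv : H := ((K.orthogonalProjectionOnto v : K) : H) with hkv
  have hLkv : L kv = 0 := (K.orthogonalProjectionOnto v).2
  have zek : (inner ℝ e₁ kv : ℝ) = 0 := he₁K kv hLkv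
  have zke : (inner ℝ kv e₁ : ℝ) = 0 := by rw [real_inner_comm]; exact zek
  set p : H := v - a • e₁ - kv with hp
  set q : H := w - b • e₁ with hq
  have hpe : (inner ℝ p e₁ : ℝ) = 0 := by
    rw [hp, inner_sub_left, inner_sub_left, real_inner_smul_left, e1self, zke, ← ha]; ring
  have hpK : ∀ k : H, L k = 0 → (inner ℝ p k : ℝ) = 0 := by
    intro k hk
    have h1 : (inner ℝ (v - kv) k : ℝ) = 0 := Submodule.starProjection_inner_eq_zero (K := K) v k hk
    have h2 : p = (v - kv) - a • e₁ := by rw [hp]; abel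
    rw [h2, inner_sub_left, h1, real_inner_smul_left, he₁K k hk]; ring
  have hqe : (inner ℝ q e₁ : ℝ) = 0 := by
    rw [hq, inner_sub_left, real_inner_smul_left, e1self, ← hb]; ring
  have hqK : ∀ k : H, L k = 0 → (inner ℝ q k : ℝ) = 0 := by
    intro k hk
    rw [hq, inner_sub_left, real_inner_smul_left, he₁K k hk, hwker k hk]; ring
  have hvdec : v = p + a • e₁ + kv := by rw [hp]; abel
  have hwdec : w = q + b • e₁ := by rw [hq]; abel
  set A : ℝ := inner ℝ (L p) p with hA
  set C : ℝ := inner ℝ (L q) q with hC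
  have hApos : 0 ≤ A := le_trans (by positivity) (hgap p hpe hpK)
  have hCpos : 0 ≤ C := le_trans (by positivity) (hgap q hqe hqK)
  have zLpe : (inner ℝ (L p) e₁ : ℝ) = 0 := by
    rw [symm, hev, real_inner_smul_right, hpe]; ring
  have zLqe : (inner ℝ (L q) e₁ : ℝ) = 0 := by
    rw [symm, hev, real_inner_smul_right, hqe]; ring
  have zLpk : (inner ℝ (L p) kv : ℝ) = 0 := by
    rw [symm, hLkv, inner_zero_right]
  have zpk : (inner ℝ p kv : ℝ) = 0 := hpK kv hLkv
  have zqk : (inner ℝ q kv : ℝ) = 0 := hqK kv hLkv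
  have zep : (inner ℝ e₁ p : ℝ) = 0 := by rw [real_inner_comm]; exact hpe
  have zeq : (inner ℝ e₁ q : ℝ) = 0 := by rw [real_inner_comm]; exact hqe
  have zkp : (inner ℝ kv p : ℝ) = 0 := by rw [real_inner_comm]; exact zpk
  have zkq : (inner ℝ kv q : ℝ) = 0 := by rw [real_inner_comm]; exact zqk
  have zqLp : (inner ℝ (L q) p : ℝ) = inner ℝ (L p) q := by
    rw [symm, real_inner_comm]
  have I1 : (inner ℝ (L v) v : ℝ) = A - lam₁ * a ^ 2 := by
    nth_rewrite 1 [hvdec]; nth_rewrite 1 [hvdec]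
    simp only [map_add, map_smul, hev, hLkv, smul_smul, add_zero,
      inner_add_left, inner_add_right, real_inner_smul_left, real_inner_smul_right,
      e1self, zLpe, zLpk, zpk, zek, zke, hpe, zep, zkp]
    rw [hA]; ring
  have I2 : (inner ℝ w φ : ℝ) = C - lam₁ * b ^ 2 := by
    rw [← hw, ← symm]
    nth_rewrite 1 [hwdec]; nth_rewrite 1 [hwdec]
    simp only [map_add, map_smul, hev, smul_smul,
      inner_add_left, inner_add_right, real_inner_smul_left, real_inner_smul_right,
      e1self, zLqe, hqe, zeq]
    rw [hC]; ring
  have I3 : (inner ℝ (L p) q : ℝ) = lam₁ * a * b := by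
    have h0 : (inner ℝ (L v) w : ℝ) = 0 := by rw [symm, hw]; exact hvφ
    nth_rewrite 1 [hvdec] at h0
    rw [hwdec] at h0
    simp only [map_add, map_smul, hev, hLkv, smul_smul, add_zero,
      inner_add_left, inner_add_right, real_inner_smul_left, real_inner_smul_right,
      e1self, zLpe, hqe, zeq, zkq, zke] at h0
    linarith
  have hCS : (inner ℝ (L p) q : ℝ) ^ 2 ≤ C * A := by
    have hforall : ∀ t : ℝ, 0 ≤ C * (t * t) + (2 * inner ℝ (L p) q) * t + A := by
      intro t
      have hmem_e : (inner ℝ (p + t • q) e₁ : ℝ) = 0 := by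
        rw [inner_add_left, real_inner_smul_left, hpe, hqe]; ring
      have hmem_K : ∀ k : H, L k = 0 → (inner ℝ (p + t • q) k : ℝ) = 0 := by
        intro k hk
        rw [inner_add_left, real_inner_smul_left, hpK k hk, hqK k hk]; ring
      have h1 : 0 ≤ (inner ℝ (L (p + t • q)) (p + t • q) : ℝ) :=
        le_trans (by positivity) (hgap _ hmem_e hmem_K)
      have h2 : (inner ℝ (L (p + t • q)) (p + t • q) : ℝ)
          = C * (t * t) + (2 * inner ℝ (L p) q) * t + A := by
        simp only [map_add, map_smul, inner_add_left, inner_add_right,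
          real_inner_smul_left, real_inner_smul_right, zqLp]
        rw [hA, hC]; ring
      linarith [h2 ▸ h1]
    have hd := discrim_le_zero hforall
    rw [discrim] at hd
    nlinarith [hd]
  rw [I1]
  rw [I2] at hneg
  have hb2 : 0 < b ^ 2 := by nlinarith
  have hpos : 0 < lam₁ * b ^ 2 := mul_pos hlam₁ hb2
  have h1 : (lam₁ * a * b) ^ 2 ≤ C * A := by rw [← I3]; exact hCS
  have h2 : C * A ≤ (lam₁ * b ^ 2) * A := mul_le_mul_of_nonneg_right (by linarith) hApos
  have h3 : (lam₁ * b ^ 2) * (lam₁ * a ^ 2) ≤ (lam₁ * b ^ 2) * A := by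
    have he : (lam₁ * b ^ 2) * (lam₁ * a ^ 2) = (lam₁ * a * b) ^ 2 := by ring
    linarith
  have h4 : lam₁ * a ^ 2 ≤ A := (mul_le_mul_iff_of_pos_left hpos).mp h3
  linarith
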